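/- Let (𝓑,𝓛,θ,𝓘_α;𝓙) be a relative generalized Boolean dynamical system and define 𝓑̃ = {(A,[B]_𝓙) : A,B ∈ 𝓑, [A]_{𝓑_reg} = [B]_{𝓑_reg}} with componentwise operations (A₁,[B₁])∪(A₂,[B₂])=(A₁∪A₂,[B₁∪B₂]), similarly for ∩ and \, and bottom (∅,[∅]). Then 𝓑̃ is a generalized Boolean algebra, and defining θ̃_α(A,[B]) = (θ_α(A),[θ_α(A)]) makes (𝓑̃,𝓛,θ̃) a Boolean dynamical system whose set of regular elements is 𝓑̃_reg = {(A,[∅]) : A ∈ 𝓑_reg}. -/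

import Mathlib

open scoped BigOperators

/-- An ideal of a (generalized) Boolean algebra: a nonempty subset closed under
binary unions and under intersection with arbitrary elements. -/
def BoolIdeal {B : Type*} [GeneralizedBooleanAlgebra B] (I : Set B) : Prop :=
  I.Nonempty ∧ (∀ a ∈ I, ∀ b ∈ I, a ⊔ b ∈ I) ∧ (∀ a ∈ I, ∀ b : B, a ⊓ b ∈ I)

/-- An action on a generalized Boolean algebra: a Boolean homomorphism
(preserving ∩, ∪, \) which sends ∅ to ∅. -/
def IsBoolAction {B : Type*} [GeneralizedBooleanAlgebra B] (f : B → B) : Prop :=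
  (∀ a b, f (a ⊓ b) = f a ⊓ f b) ∧ (∀ a b, f (a ⊔ b) = f a ⊔ f b) ∧
    (∀ a b, f (a \ b) = f a \ f b) ∧ f ⊥ = ⊥

/-- Δ_A = {α ∈ 𝓛 : θ_α(A) ≠ ∅}. -/
def Delta {B L : Type*} [GeneralizedBooleanAlgebra B] (θ : L → B → B) (A : B) : Set L :=
  {α | θ α A ≠ ⊥}

/-- A ∈ 𝓑 is regular if every nonempty B ⊆ A satisfies 0 < λ_B < ∞. -/
def BReg {B L : Type*} [GeneralizedBooleanAlgebra B] (θ : L → B → B) : Set B :=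
  {A | ∀ b : B, b ≤ A → b ≠ ⊥ → (Delta θ b).Nonempty ∧ (Delta θ b).Finite}

/-- The carrier of 𝓑̃ before passing to the quotient: pairs (A,B) with
[A]_{𝓑_reg} = [B]_{𝓑_reg}. -/
def PairCarrier {B L : Type*} [GeneralizedBooleanAlgebra B] (θ : L → B → B) : Type _ :=
  {p : B × B // ∃ C ∈ BReg θ, p.1 ⊔ C = p.2 ⊔ C}

/-- The setoid identifying (A,B₁) and (A,B₂) when [B₁]_𝓙 = [B₂]_𝓙, so that the quotient
is 𝓑̃ = {(A,[B]_𝓙) : [A]_{𝓑_reg} = [B]_{𝓑_reg}}. -/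
def pairSetoid {B L : Type*} [GeneralizedBooleanAlgebra B] (θ : L → B → B)
    (J : Set B) (hJ : BoolIdeal J) : Setoid (PairCarrier θ) where
  r q q' := q.1.1 = q'.1.1 ∧ ∃ C ∈ J, q.1.2 ⊔ C = q'.1.2 ⊔ C
  iseqv := by
    constructor
    · intro q
      obtain ⟨c, hc⟩ := hJ.1
      exact ⟨rfl, c, hc, rfl⟩
    · rintro q q' ⟨h, c, hc, hr⟩
      exact ⟨h.symm, c, hc, hr.symm⟩
    · rintro q q' q'' ⟨h1, d, hd, hr1⟩ ⟨h2, e, he, hr2⟩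
      refine ⟨h1.trans h2, d ⊔ e, hJ.2.1 d hd e he, ?_⟩
      calc q.1.2 ⊔ (d ⊔ e) = q.1.2 ⊔ d ⊔ e := by rw [sup_assoc]
        _ = q'.1.2 ⊔ d ⊔ e := by rw [hr1]
        _ = q'.1.2 ⊔ e ⊔ d := by rw [sup_right_comm]
        _ = q''.1.2 ⊔ e ⊔ d := by rw [hr2]
        _ = q''.1.2 ⊔ (d ⊔ e) := by rw [sup_right_comm, sup_assoc]

section Aux
variable {B L : Type*} [GeneralizedBooleanAlgebra B]

lemma ideal_bot_mem {I : Set B} (hI : BoolIdeal I) : (⊥ : B) ∈ I := by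
  obtain ⟨c, hc⟩ := hI.1
  have := hI.2.2 c hc ⊥
  rwa [inf_bot_eq] at this

lemma ideal_down {I : Set B} (hI : BoolIdeal I) {x c : B} (hc : c ∈ I) (h : x ≤ c) : x ∈ I := by
  have := hI.2.2 c hc x
  rwa [inf_eq_right.2 h] at this

def IRel (I : Set B) (a b : B) : Prop := ∃ C ∈ I, a ⊔ C = b ⊔ C

lemma irel_refl {I : Set B} (hI : BoolIdeal I) (a : B) : IRel I a a := by
  obtain ⟨c, hc⟩ := hI.1
  exact ⟨c, hc, rfl⟩

lemma irel_symm {I : Set B} {a b : B} (h : IRel I a b) : IRel I b a := by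
  obtain ⟨c, hc, h⟩ := h
  exact ⟨c, hc, h.symm⟩

lemma irel_iff {I : Set B} (hI : BoolIdeal I) {a b : B} :
    IRel I a b ↔ a \ b ∈ I ∧ b \ a ∈ I := by
  constructor
  · rintro ⟨C, hC, h⟩
    constructor
    · refine ideal_down hI hC ?_
      calc a \ b ≤ (a ⊔ C) \ b := sdiff_le_sdiff_right le_sup_left
        _ = (b ⊔ C) \ b := by rw [h]
        _ = C \ b := sup_sdiff_left_self
        _ ≤ C := sdiff_le
    · refine ideal_down hI hC ?_
      calc b \ a ≤ (b ⊔ C) \ a := sdiff_le_sdiff_right le_sup_left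
        _ = (a ⊔ C) \ a := by rw [h]
        _ = C \ a := sup_sdiff_left_self
        _ ≤ C := sdiff_le
  · rintro ⟨h1, h2⟩
    refine ⟨a \ b ⊔ b \ a, hI.2.1 _ h1 _ h2, ?_⟩
    have hb : b ≤ a ⊔ (a \ b ⊔ b \ a) := by
      conv_lhs => rw [← sup_inf_sdiff b a]
      exact sup_le (inf_le_right.trans le_sup_left)
        (le_sup_of_le_right le_sup_right)
    have ha : a ≤ b ⊔ (a \ b ⊔ b \ a) := by
      conv_lhs => rw [← sup_inf_sdiff a b]
      exact sup_le (inf_le_right.trans le_sup_left)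
        (le_sup_of_le_right le_sup_left)
    exact le_antisymm (sup_le ha le_sup_right) (sup_le hb le_sup_right)

lemma irel_bot_iff' {I : Set B} (hI : BoolIdeal I) {x : B} : IRel I x ⊥ ↔ x ∈ I := by
  rw [irel_iff hI, sdiff_bot, bot_sdiff]
  exact ⟨fun h => h.1, fun h => ⟨h, ideal_bot_mem hI⟩⟩

lemma key_inf (a a' b b' : B) : (a ⊓ a') \ (b ⊓ b') ≤ a \ b ⊔ a' \ b' := by
  rw [sdiff_inf]
  exact sup_le_sup (sdiff_le_sdiff_right inf_le_left) (sdiff_le_sdiff_right inf_le_right)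

lemma key_sup (a a' b b' : B) : (a ⊔ a') \ (b ⊔ b') ≤ a \ b ⊔ a' \ b' := by
  rw [sup_sdiff]
  exact sup_le_sup (sdiff_le_sdiff_left le_sup_left) (sdiff_le_sdiff_left le_sup_right)

lemma key_sdiff (a a' b b' : B) : (a \ a') \ (b \ b') ≤ a \ b ⊔ b' \ a' := by
  rw [sdiff_sdiff_right]
  refine sup_le_sup (sdiff_le_sdiff_right sdiff_le) ?_
  refine le_sdiff.2 ⟨inf_le_right, ?_⟩
  exact disjoint_sdiff_self_left.mono_left (inf_le_left.trans inf_le_left)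

lemma irel_inf {I : Set B} (hI : BoolIdeal I) {a b a' b' : B}
    (h : IRel I a b) (h' : IRel I a' b') : IRel I (a ⊓ a') (b ⊓ b') := by
  rw [irel_iff hI] at h h' ⊢
  exact ⟨ideal_down hI (hI.2.1 _ h.1 _ h'.1) (key_inf ..),
    ideal_down hI (hI.2.1 _ h.2 _ h'.2) (key_inf ..)⟩

lemma irel_sup {I : Set B} (hI : BoolIdeal I) {a b a' b' : B}
    (h : IRel I a b) (h' : IRel I a' b') : IRel I (a ⊔ a') (b ⊔ b') := by
  rw [irel_iff hI] at h h' ⊢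
  exact ⟨ideal_down hI (hI.2.1 _ h.1 _ h'.1) (key_sup ..),
    ideal_down hI (hI.2.1 _ h.2 _ h'.2) (key_sup ..)⟩

lemma irel_sdiff {I : Set B} (hI : BoolIdeal I) {a b a' b' : B}
    (h : IRel I a b) (h' : IRel I a' b') : IRel I (a \ a') (b \ b') := by
  rw [irel_iff hI] at h h' ⊢
  exact ⟨ideal_down hI (hI.2.1 _ h.1 _ h'.2) (key_sdiff ..),
    ideal_down hI (hI.2.1 _ h.2 _ h'.1) (key_sdiff ..)⟩

end Aux

section Aux2
variable {B L : Type*} [GeneralizedBooleanAlgebra B] {θ : L → B → B}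

lemma breg_mono {a A : B} (h : a ≤ A) (hA : A ∈ BReg θ) : a ∈ BReg θ :=
  fun b hb => hA b (hb.trans h)

lemma breg_bot : (⊥ : B) ∈ BReg θ :=
  fun b hb hne => absurd (le_bot_iff.1 hb) hne

lemma delta_bot (hθ : ∀ α, IsBoolAction (θ α)) : Delta θ (⊥ : B) = ∅ := by
  ext α
  simp [Delta, (hθ α).2.2.2]

lemma delta_sup (hθ : ∀ α, IsBoolAction (θ α)) (a b : B) :
    Delta θ (a ⊔ b) = Delta θ a ∪ Delta θ b := by
  ext α
  simp only [Delta, Set.mem_setOf_eq, Set.mem_union, (hθ α).2.1]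
  rw [← not_and_or, not_iff_not, sup_eq_bot_iff]

lemma breg_sup (hθ : ∀ α, IsBoolAction (θ α)) {A₁ A₂ : B}
    (h1 : A₁ ∈ BReg θ) (h2 : A₂ ∈ BReg θ) : A₁ ⊔ A₂ ∈ BReg θ := by
  intro b hb hne
  have hdecomp : b ⊓ A₁ ⊔ b \ A₁ = b := sup_inf_sdiff b A₁
  have hd : Delta θ b = Delta θ (b ⊓ A₁) ∪ Delta θ (b \ A₁) := by
    rw [← delta_sup hθ, hdecomp]
  have hle2 : b \ A₁ ≤ A₂ := by
    calc b \ A₁ ≤ (A₁ ⊔ A₂) \ A₁ := sdiff_le_sdiff_right hb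
      _ = A₂ \ A₁ := sup_sdiff_left_self
      _ ≤ A₂ := sdiff_le
  have hfin : ∀ c : B, c ∈ BReg θ → ∀ x ≤ c, (Delta θ x).Finite := by
    intro c hc x hx
    by_cases hxb : x = ⊥
    · subst hxb; rw [delta_bot hθ]; exact Set.finite_empty
    · exact (hc x hx hxb).2
  refine ⟨?_, by rw [hd]; exact (hfin _ h1 _ inf_le_right).union (hfin _ h2 _ hle2)⟩
  rcases eq_or_ne (b ⊓ A₁) ⊥ with h | h
  · have hne2 : b \ A₁ ≠ ⊥ := by
      intro hh
      apply hne
      rw [← hdecomp, h, hh, sup_idem]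
    rw [hd]
    exact ((h2 _ hle2 hne2).1).mono Set.subset_union_right
  · rw [hd]
    exact ((h1 _ inf_le_right h).1).mono Set.subset_union_left

lemma breg_ideal (hθ : ∀ α, IsBoolAction (θ α)) : BoolIdeal (BReg θ) :=
  ⟨⟨⊥, breg_bot⟩, fun _ ha _ hb => breg_sup hθ ha hb,
    fun _ ha _ => breg_mono inf_le_left ha⟩

end Aux2

section Aux3
variable {B L : Type*} [GeneralizedBooleanAlgebra B] (θ : L → B → B)
  (hθ : ∀ α, IsBoolAction (θ α)) (J : Set B) (hJ : BoolIdeal J)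

lemma pc_prop (p : PairCarrier θ) : IRel (BReg θ) p.1.1 p.1.2 := p.2

def pInf (p q : PairCarrier θ) : PairCarrier θ :=
  ⟨(p.1.1 ⊓ q.1.1, p.1.2 ⊓ q.1.2), irel_inf (breg_ideal hθ) p.2 q.2⟩

def pSup (p q : PairCarrier θ) : PairCarrier θ :=
  ⟨(p.1.1 ⊔ q.1.1, p.1.2 ⊔ q.1.2), irel_sup (breg_ideal hθ) p.2 q.2⟩

def pSdiff (p q : PairCarrier θ) : PairCarrier θ :=
  ⟨(p.1.1 \ q.1.1, p.1.2 \ q.1.2), irel_sdiff (breg_ideal hθ) p.2 q.2⟩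

def pBot : PairCarrier θ := ⟨((⊥ : B), (⊥ : B)), irel_refl (breg_ideal hθ) _⟩

def pTheta (α : L) (p : PairCarrier θ) : PairCarrier θ :=
  ⟨(θ α p.1.1, θ α p.1.1), irel_refl (breg_ideal hθ) _⟩

def qInf : Quotient (pairSetoid θ J hJ) → Quotient (pairSetoid θ J hJ) →
    Quotient (pairSetoid θ J hJ) :=
  Quotient.lift₂ (fun p q => Quotient.mk _ (pInf θ hθ p q)) (by
    rintro a b a' b' ⟨h1, h2⟩ ⟨h1', h2'⟩
    exact Quotient.sound ⟨by simp only [pInf, h1, h1'], irel_inf hJ h2 h2'⟩)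

def qSup : Quotient (pairSetoid θ J hJ) → Quotient (pairSetoid θ J hJ) →
    Quotient (pairSetoid θ J hJ) :=
  Quotient.lift₂ (fun p q => Quotient.mk _ (pSup θ hθ p q)) (by
    rintro a b a' b' ⟨h1, h2⟩ ⟨h1', h2'⟩
    exact Quotient.sound ⟨by simp only [pSup, h1, h1'], irel_sup hJ h2 h2'⟩)

def qSdiff : Quotient (pairSetoid θ J hJ) → Quotient (pairSetoid θ J hJ) →
    Quotient (pairSetoid θ J hJ) :=
  Quotient.lift₂ (fun p q => Quotient.mk _ (pSdiff θ hθ p q)) (by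
    rintro a b a' b' ⟨h1, h2⟩ ⟨h1', h2'⟩
    exact Quotient.sound ⟨by simp only [pSdiff, h1, h1'], irel_sdiff hJ h2 h2'⟩)

def qBot : Quotient (pairSetoid θ J hJ) := Quotient.mk _ (pBot θ hθ)

def qTheta (α : L) : Quotient (pairSetoid θ J hJ) → Quotient (pairSetoid θ J hJ) :=
  Quotient.lift (fun p => Quotient.mk _ (pTheta θ hθ α p)) (by
    rintro a b ⟨h1, h2⟩
    have he : pTheta θ hθ α a = pTheta θ hθ α b := Subtype.ext (by simp only [pTheta, h1])
    simp only [he])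

lemma mk_eq_iff {p q : PairCarrier θ} :
    (Quotient.mk (pairSetoid θ J hJ) p = Quotient.mk (pairSetoid θ J hJ) q) ↔
      p.1.1 = q.1.1 ∧ IRel J p.1.2 q.1.2 := by
  rw [Quotient.eq]
  exact Iff.rfl


lemma mk_eq_bot_iff {p : PairCarrier θ} :
    Quotient.mk (pairSetoid θ J hJ) p = qBot θ hθ J hJ ↔ p.1.1 = ⊥ ∧ p.1.2 ∈ J := by
  rw [qBot, mk_eq_iff θ J hJ]
  show p.1.1 = ⊥ ∧ IRel J p.1.2 ⊥ ↔ _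
  rw [irel_bot_iff' hJ]

lemma theta_ne_bot (α : L) (p : PairCarrier θ) :
    (qTheta θ hθ J hJ α (Quotient.mk _ p) ≠ qBot θ hθ J hJ) ↔ θ α p.1.1 ≠ ⊥ := by
  rw [not_iff_not]
  show Quotient.mk _ (pTheta θ hθ α p) = _ ↔ _
  rw [mk_eq_bot_iff θ hθ J hJ]
  constructor
  · exact fun h => h.1
  · intro h
    exact ⟨h, by simp only [pTheta, h]; exact ideal_bot_mem hJ⟩

lemma mk_pc_eq {p q : PairCarrier θ} (h : p.1 = q.1) :
    Quotient.mk (pairSetoid θ J hJ) p = Quotient.mk (pairSetoid θ J hJ) q :=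
  congrArg _ (Subtype.ext h)

end Aux3

/-- Given a relative generalized Boolean dynamical system (𝓑,𝓛,θ,𝓘_α;𝓙),
the set 𝓑̃ = {(A,[B]_𝓙) : [A]_{𝓑_reg} = [B]_{𝓑_reg}} with componentwise operations and
bottom (∅,[∅]) is a generalized Boolean algebra, θ̃_α(A,[B]) = (θ_α(A),[θ_α(A)]) makes
(𝓑̃,𝓛,θ̃) a Boolean dynamical system, and its regular elements are exactly
𝓑̃_reg = {(A,[∅]) : A ∈ 𝓑_reg}. -/
theorem tilde_boolean_dynamical_system {B L : Type*} [GeneralizedBooleanAlgebra B]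
    (θ : L → B → B) (hθ : ∀ α, IsBoolAction (θ α))
    (J : Set B) (hJ : BoolIdeal J) (hJreg : J ⊆ BReg θ) :
    ∃ (inf' sup' sdiff' : Quotient (pairSetoid θ J hJ) → Quotient (pairSetoid θ J hJ) →
        Quotient (pairSetoid θ J hJ)) (bot' : Quotient (pairSetoid θ J hJ))
      (θq : L → Quotient (pairSetoid θ J hJ) → Quotient (pairSetoid θ J hJ)),
      -- the operations are given componentwise on representatives
      (∀ q q' r : PairCarrier θ, r.1 = (q.1.1 ⊓ q'.1.1, q.1.2 ⊓ q'.1.2) →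
        inf' (Quotient.mk _ q) (Quotient.mk _ q') = Quotient.mk _ r) ∧
      (∀ q q' r : PairCarrier θ, r.1 = (q.1.1 ⊔ q'.1.1, q.1.2 ⊔ q'.1.2) →
        sup' (Quotient.mk _ q) (Quotient.mk _ q') = Quotient.mk _ r) ∧
      (∀ q q' r : PairCarrier θ, r.1 = (q.1.1 \ q'.1.1, q.1.2 \ q'.1.2) →
        sdiff' (Quotient.mk _ q) (Quotient.mk _ q') = Quotient.mk _ r) ∧
      (∀ r : PairCarrier θ, r.1 = ((⊥ : B), (⊥ : B)) → bot' = Quotient.mk _ r) ∧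
      -- 𝓑̃ is a generalized Boolean algebra: distributive lattice axioms,
      (∀ x y, sup' x y = sup' y x) ∧
      (∀ x y z, sup' (sup' x y) z = sup' x (sup' y z)) ∧
      (∀ x y, inf' x y = inf' y x) ∧
      (∀ x y z, inf' (inf' x y) z = inf' x (inf' y z)) ∧
      (∀ x y, sup' x (inf' x y) = x) ∧
      (∀ x y, inf' x (sup' x y) = x) ∧
      (∀ x y z, inf' x (sup' y z) = sup' (inf' x y) (inf' x z)) ∧
      (∀ x, inf' x bot' = bot') ∧
      (∀ x y, sup' (inf' x y) (sdiff' x y) = x) ∧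
      (∀ x y, inf' (inf' x y) (sdiff' x y) = bot') ∧
      -- θ̃_α(A,[B]) = (θ_α(A),[θ_α(A)]),
      (∀ (α : L) (q r : PairCarrier θ), r.1 = (θ α q.1.1, θ α q.1.1) →
        θq α (Quotient.mk _ q) = Quotient.mk _ r) ∧
      -- each θ̃_α is an action, so (𝓑̃,𝓛,θ̃) is a Boolean dynamical system,
      (∀ (α : L) (x y), θq α (inf' x y) = inf' (θq α x) (θq α y)) ∧
      (∀ (α : L) (x y), θq α (sup' x y) = sup' (θq α x) (θq α y)) ∧
      (∀ (α : L) (x y), θq α (sdiff' x y) = sdiff' (θq α x) (θq α y)) ∧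
      (∀ α : L, θq α bot' = bot') ∧
      -- and the regular elements of (𝓑̃,𝓛,θ̃) are exactly {(A,[∅]) : A ∈ 𝓑_reg}.
      ({x : Quotient (pairSetoid θ J hJ) |
          ∀ y, inf' y x = y → y ≠ bot' →
            ({α : L | θq α y ≠ bot'}.Nonempty ∧ {α : L | θq α y ≠ bot'}.Finite)} =
        {x | ∃ A ∈ BReg θ, ∃ q : PairCarrier θ, q.1 = (A, (⊥ : B)) ∧
          x = Quotient.mk _ q}) := by
  refine ⟨qInf θ hθ J hJ, qSup θ hθ J hJ, qSdiff θ hθ J hJ, qBot θ hθ J hJ, qTheta θ hθ J hJ,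
    ?_, ?_, ?_, ?_, ?_, ?_, ?_, ?_, ?_, ?_, ?_, ?_, ?_, ?_, ?_, ?_, ?_, ?_, ?_, ?_⟩
  · intro q q' r h
    have : r = pInf θ hθ q q' := Subtype.ext h
    rw [this]; rfl
  · intro q q' r h
    have : r = pSup θ hθ q q' := Subtype.ext h
    rw [this]; rfl
  · intro q q' r h
    have : r = pSdiff θ hθ q q' := Subtype.ext h
    rw [this]; rfl
  · intro r h
    have : r = pBot θ hθ := Subtype.ext h
    rw [this]; rfl
  · intro x y
    refine Quotient.inductionOn₂ x y fun p q => ?_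
    exact mk_pc_eq θ J hJ (Prod.ext_iff.2 ⟨sup_comm _ _, sup_comm _ _⟩)
  · intro x y z
    refine Quotient.inductionOn₃ x y z fun p q r => ?_
    exact mk_pc_eq θ J hJ (Prod.ext_iff.2 ⟨sup_assoc _ _ _, sup_assoc _ _ _⟩)
  · intro x y
    refine Quotient.inductionOn₂ x y fun p q => ?_
    exact mk_pc_eq θ J hJ (Prod.ext_iff.2 ⟨inf_comm _ _, inf_comm _ _⟩)
  · intro x y z
    refine Quotient.inductionOn₃ x y z fun p q r => ?_
    exact mk_pc_eq θ J hJ (Prod.ext_iff.2 ⟨inf_assoc _ _ _, inf_assoc _ _ _⟩)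
  · intro x y
    refine Quotient.inductionOn₂ x y fun p q => ?_
    exact mk_pc_eq θ J hJ (Prod.ext_iff.2 ⟨sup_inf_self .., sup_inf_self ..⟩)
  · intro x y
    refine Quotient.inductionOn₂ x y fun p q => ?_
    exact mk_pc_eq θ J hJ (Prod.ext_iff.2 ⟨inf_sup_self .., inf_sup_self ..⟩)
  · intro x y z
    refine Quotient.inductionOn₃ x y z fun p q r => ?_
    exact mk_pc_eq θ J hJ (Prod.ext_iff.2 ⟨inf_sup_left _ _ _, inf_sup_left _ _ _⟩)
  · intro x
    refine Quotient.inductionOn x fun p => ?_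
    exact mk_pc_eq θ J hJ (Prod.ext_iff.2 ⟨inf_bot_eq _, inf_bot_eq _⟩)
  · intro x y
    refine Quotient.inductionOn₂ x y fun p q => ?_
    exact mk_pc_eq θ J hJ (Prod.ext_iff.2 ⟨sup_inf_sdiff _ _, sup_inf_sdiff _ _⟩)
  · intro x y
    refine Quotient.inductionOn₂ x y fun p q => ?_
    exact mk_pc_eq θ J hJ (Prod.ext_iff.2 ⟨inf_inf_sdiff _ _, inf_inf_sdiff _ _⟩)
  · intro α q r h
    have : r = pTheta θ hθ α q := Subtype.ext h
    rw [this]; rfl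
  · intro α x y
    refine Quotient.inductionOn₂ x y fun p q => ?_
    exact mk_pc_eq θ J hJ (Prod.ext_iff.2 ⟨(hθ α).1 _ _, (hθ α).1 _ _⟩)
  · intro α x y
    refine Quotient.inductionOn₂ x y fun p q => ?_
    exact mk_pc_eq θ J hJ (Prod.ext_iff.2 ⟨(hθ α).2.1 _ _, (hθ α).2.1 _ _⟩)
  · intro α x y
    refine Quotient.inductionOn₂ x y fun p q => ?_
    exact mk_pc_eq θ J hJ (Prod.ext_iff.2 ⟨(hθ α).2.2.1 _ _, (hθ α).2.2.1 _ _⟩)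
  · intro α
    exact mk_pc_eq θ J hJ (Prod.ext_iff.2 ⟨(hθ α).2.2.2, (hθ α).2.2.2⟩)
  · ext x
    refine Quotient.inductionOn x fun p => ?_
    obtain ⟨C, hC, hsup⟩ := p.2
    simp only [Set.mem_setOf_eq]
    constructor
    · intro hreg
      -- Step 1: the first component is regular.
      have hA : p.1.1 ∈ BReg θ := by
        intro b hb hbne
        have hwit : ∃ D ∈ BReg θ, b ⊔ D = (b ⊓ p.1.2) ⊔ D := by
          refine ⟨b \ p.1.2, ?_, ?_⟩
          · refine breg_mono ?_ hC
            calc b \ p.1.2 ≤ (p.1.1 ⊔ C) \ p.1.2 :=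
                  sdiff_le_sdiff_right (hb.trans le_sup_left)
              _ = (p.1.2 ⊔ C) \ p.1.2 := by rw [hsup]
              _ = C \ p.1.2 := sup_sdiff_left_self
              _ ≤ C := sdiff_le
          · rw [sup_eq_left.2 sdiff_le, sup_inf_sdiff]
        set pb : PairCarrier θ := ⟨(b, b ⊓ p.1.2), hwit⟩ with hpb
        have hle : qInf θ hθ J hJ (Quotient.mk (pairSetoid θ J hJ) pb)
            (Quotient.mk (pairSetoid θ J hJ) p) = Quotient.mk (pairSetoid θ J hJ) pb := by
          rw [show qInf θ hθ J hJ (Quotient.mk (pairSetoid θ J hJ) pb)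
            (Quotient.mk (pairSetoid θ J hJ) p)
            = Quotient.mk (pairSetoid θ J hJ) (pInf θ hθ pb p) from rfl,
            mk_eq_iff θ J hJ]
          refine ⟨inf_eq_left.2 hb, ?_⟩
          show IRel J ((b ⊓ p.1.2) ⊓ p.1.2) (b ⊓ p.1.2)
          rw [inf_assoc, inf_idem]
          exact irel_refl hJ _
        have hne : Quotient.mk (pairSetoid θ J hJ) pb ≠ qBot θ hθ J hJ := by
          rw [Ne, mk_eq_bot_iff θ hθ J hJ]
          rintro ⟨h1, -⟩
          exact hbne h1
        have hmain := hreg _ hle hne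
        have hset : {α : L | qTheta θ hθ J hJ α (Quotient.mk (pairSetoid θ J hJ) pb)
            ≠ qBot θ hθ J hJ} = Delta θ b := by
          ext α
          exact theta_ne_bot θ hθ J hJ α pb
        rwa [hset] at hmain
      -- Step 2: the second component lies in J.
      have hmemJ : ∀ b : B, b ∈ BReg θ → b ≤ p.1.2 → b ∈ J := by
        intro b hbreg hble
        by_contra hbJ
        set y : PairCarrier θ := ⟨((⊥ : B), b), b, hbreg, by rw [bot_sup_eq, sup_idem]⟩ with hy
        have hle : qInf θ hθ J hJ (Quotient.mk (pairSetoid θ J hJ) y)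
            (Quotient.mk (pairSetoid θ J hJ) p) = Quotient.mk (pairSetoid θ J hJ) y := by
          rw [show qInf θ hθ J hJ (Quotient.mk (pairSetoid θ J hJ) y)
            (Quotient.mk (pairSetoid θ J hJ) p)
            = Quotient.mk (pairSetoid θ J hJ) (pInf θ hθ y p) from rfl,
            mk_eq_iff θ J hJ]
          refine ⟨bot_inf_eq _, ?_⟩
          show IRel J (b ⊓ p.1.2) b
          rw [inf_eq_left.2 hble]
          exact irel_refl hJ _
        have hne : Quotient.mk (pairSetoid θ J hJ) y ≠ qBot θ hθ J hJ := by
          rw [Ne, mk_eq_bot_iff θ hθ J hJ]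
          rintro ⟨-, h2⟩
          exact hbJ h2
        obtain ⟨hne', -⟩ := hreg _ hle hne
        have hset : {α : L | qTheta θ hθ J hJ α (Quotient.mk (pairSetoid θ J hJ) y)
            ≠ qBot θ hθ J hJ} = Delta θ (⊥ : B) := by
          ext α
          exact theta_ne_bot θ hθ J hJ α y
        rw [hset, delta_bot hθ] at hne'
        exact Set.not_nonempty_empty hne'
      have hJ1 : p.1.2 ⊓ C ∈ J := hmemJ _ (breg_mono inf_le_right hC) inf_le_left
      have hJ2 : p.1.2 \ C ∈ J := by
        refine hmemJ _ (breg_mono ?_ hA) sdiff_le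
        calc p.1.2 \ C ≤ (p.1.2 ⊔ C) \ C := sdiff_le_sdiff_right le_sup_left
          _ = (p.1.1 ⊔ C) \ C := by rw [hsup]
          _ = p.1.1 \ C := sup_sdiff_right_self
          _ ≤ p.1.1 := sdiff_le
      have hBJ : p.1.2 ∈ J := by
        have := hJ.2.1 _ hJ1 _ hJ2
        rwa [sup_inf_sdiff] at this
      refine ⟨p.1.1, hA, ⟨(p.1.1, (⊥ : B)), p.1.1, hA, by rw [sup_idem, bot_sup_eq]⟩, rfl, ?_⟩
      refine (mk_eq_iff θ J hJ).2 ?_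
      exact ⟨rfl, (irel_bot_iff' hJ).2 hBJ⟩
    · rintro ⟨A, hA, q', hq', hx⟩
      intro y hy hyne
      obtain ⟨r, rfl⟩ := Quotient.exists_rep y
      rw [hx] at hy
      rw [show qInf θ hθ J hJ (Quotient.mk (pairSetoid θ J hJ) r)
        (Quotient.mk (pairSetoid θ J hJ) q')
        = Quotient.mk (pairSetoid θ J hJ) (pInf θ hθ r q') from rfl,
        mk_eq_iff θ J hJ] at hy
      obtain ⟨h1, h2⟩ := hy
      have hq1 : q'.1.1 = A := by rw [hq']
      have hq2 : q'.1.2 = (⊥ : B) := by rw [hq']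
      have h2' : IRel J (r.1.2 ⊓ q'.1.2) r.1.2 := h2
      rw [hq2, inf_bot_eq] at h2'
      have hrJ : r.1.2 ∈ J := (irel_bot_iff' hJ).1 (irel_symm h2')
      have hrne : r.1.1 ≠ ⊥ := by
        intro hb
        exact hyne ((mk_eq_bot_iff θ hθ J hJ).2 ⟨hb, hrJ⟩)
      have hrle : r.1.1 ≤ A := by
        rw [← hq1]
        exact inf_eq_left.1 h1
      have hmain := hA _ hrle hrne
      have hset : {α : L | qTheta θ hθ J hJ α (Quotient.mk (pairSetoid θ J hJ) r)
          ≠ qBot θ hθ J hJ} = Delta θ r.1.1 := by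
        ext α
        exact theta_ne_bot θ hθ J hJ α r
      rw [hset]
      exact hmain
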